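/- Let μ be a positive Radon measure on ℝⁿ with μ(mI) ≲ ℓ(mI)^α for all cubes and dilation factors m ≥ 1, and let 0 < δ ≤ 1. Then for any cube I, the dyadic-annuli sum is controlled by the outer density: Σ_{m≥2} m^{−(α+δ)} (μ(mI) − μ((m−1)I))/ℓ(I)^α ≲ ρ_out(I), where ρ_out(I) = Σ_{m≥1} μ(mI)/(ℓ(mI)^α m^{δ+1}). -/

import Mathlib

open MeasureTheory
open scoped Classical ENNReal

noncomputable section

/-- The closed axis-parallel cube with center `c` and side length `l`. -/
def centeredCube (n : ℕ) (c : EuclideanSpace ℝ (Fin n)) (l : ℝ) :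
    Set (EuclideanSpace ℝ (Fin n)) :=
  {x | ∀ i, |x i - c i| ≤ l / 2}

lemma bern_aux (s : ℝ) (hs : 0 < s) (x : ℝ) (hx : 1 ≤ x) :
    x ^ (-s) - (x + 1) ^ (-s) ≤ s * x ^ (-s - 1) := by
  have hx0 : (0:ℝ) < x := lt_of_lt_of_le one_pos hx
  obtain ⟨c, hc, hceq⟩ := exists_hasDerivAt_eq_slope (fun y : ℝ => y ^ (-s))
      (fun y : ℝ => (-s) * y ^ (-s - 1)) (lt_add_one x)
      (by
        apply ContinuousOn.rpow_const continuousOn_id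
        intro y hy
        exact Or.inl (ne_of_gt (lt_of_lt_of_le hx0 hy.1)))
      (by
        intro y hy
        exact Real.hasDerivAt_rpow_const (Or.inl (ne_of_gt (lt_trans hx0 hy.1))))
  have hcx : x < c := hc.1
  have hc0 : (0:ℝ) < c := lt_trans hx0 hcx
  rw [add_sub_cancel_left, div_one] at hceq
  have heq : x ^ (-s) - (x + 1) ^ (-s) = s * c ^ (-s - 1) := by
    nlinarith [hceq]
  rw [heq]
  have hle : c ^ (-s - 1) ≤ x ^ (-s - 1) := by
    rw [show -s - 1 = -(s + 1) by ring, Real.rpow_neg hx0.le, Real.rpow_neg hc0.le]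
    apply inv_anti₀ (Real.rpow_pos_of_pos hx0 _)
    exact Real.rpow_le_rpow hx0.le hcx.le (by linarith)
  nlinarith [hle]

/-- Under the power growth `μ(mI) ≲ ℓ(mI)^α`, the dyadic-annuli sum
`Σ_{m ≥ 2} m^{-(α+δ)} (μ(mI) - μ((m-1)I))/ℓ(I)^α` is controlled by the outer density
`ρ_out(I) = Σ_{m ≥ 1} μ(mI)/(ℓ(mI)^α m^{δ+1})`. -/
theorem annuli_sum_le_outer_density (n : ℕ) (α δ C : ℝ) (hα : 0 < α) (hαn : α ≤ n)
    (hδ : 0 < δ) (hδ1 : δ ≤ 1) (hC : 0 ≤ C)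
    (μ : Measure (EuclideanSpace ℝ (Fin n))) :
    ∃ C' : ℝ, 0 < C' ∧
      ∀ (c : EuclideanSpace ℝ (Fin n)) (l : ℝ), 0 < l →
      (∀ m : ℕ, 1 ≤ m →
        μ (centeredCube n c (m * l)) ≤ ENNReal.ofReal (C * ((m : ℝ) * l) ^ α)) →
      (∑' m : ℕ, if 2 ≤ m then
          (m : ℝ) ^ (-(α + δ)) *
            ((μ (centeredCube n c (m * l))).toReal -
              (μ (centeredCube n c ((m - 1 : ℕ) * l))).toReal) / l ^ α
        else 0) ≤
      C' * ∑' m : ℕ, if 1 ≤ m then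
          (μ (centeredCube n c (m * l))).toReal / (((m : ℝ) * l) ^ α * (m : ℝ) ^ (δ + 1))
        else 0 := by
  set s := α + δ with hs_def
  have hs : 0 < s := by positivity
  refine ⟨s + 2 ^ (s + 1), by positivity, ?_⟩
  intro c l hl hgrow
  -- abbreviations
  set a : ℕ → ℝ := fun m => (μ (centeredCube n c (m * l))).toReal with ha_def
  set F : ℕ → ℝ := fun m => if 2 ≤ m then
      (m : ℝ) ^ (-(α + δ)) *
        ((μ (centeredCube n c (m * l))).toReal -
          (μ (centeredCube n c ((m - 1 : ℕ) * l))).toReal) / l ^ α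
    else 0 with hF_def
  set G : ℕ → ℝ := fun m => if 1 ≤ m then
      (μ (centeredCube n c (m * l))).toReal / (((m : ℝ) * l) ^ α * (m : ℝ) ^ (δ + 1))
    else 0 with hG_def
  have hFm : ∀ m : ℕ, 2 ≤ m → F m = (m : ℝ) ^ (-s) * (a m - a (m - 1)) / l ^ α := by
    intro m hm; simp only [hF_def, if_pos hm, ha_def, hs_def]
  have hGm : ∀ m : ℕ, 1 ≤ m → G m = a m / (((m : ℝ) * l) ^ α * (m : ℝ) ^ (δ + 1)) := by
    intro m hm; simp only [hG_def, if_pos hm, ha_def]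
  -- basic facts
  have hcube : ∀ m k : ℕ, m ≤ k →
      centeredCube n c (m * l) ⊆ centeredCube n c (k * l) := by
    intro m k hmk x hx i
    have h1 : (m : ℝ) * l ≤ (k : ℝ) * l := by
      apply mul_le_mul_of_nonneg_right _ hl.le
      exact_mod_cast hmk
    have := hx i
    dsimp [centeredCube] at this ⊢
    linarith
  have hfin : ∀ m : ℕ, 1 ≤ m → μ (centeredCube n c (m * l)) ≠ ⊤ :=
    fun m hm => ne_top_of_le_ne_top ENNReal.ofReal_ne_top (hgrow m hm)
  have ha0 : ∀ m, 0 ≤ a m := fun m => ENNReal.toReal_nonneg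
  have hamono : ∀ m k : ℕ, 1 ≤ k → m ≤ k → a m ≤ a k := by
    intro m k hk hmk
    exact ENNReal.toReal_mono (hfin k hk) (measure_mono (hcube m k hmk))
  have haC : ∀ m : ℕ, 1 ≤ m → a m ≤ C * ((m : ℝ) * l) ^ α := by
    intro m hm
    have hm0 : (0:ℝ) < (m : ℝ) * l := by
      have : (1:ℝ) ≤ (m : ℝ) := by exact_mod_cast hm
      nlinarith
    exact ENNReal.toReal_le_of_le_ofReal
      (mul_nonneg hC (Real.rpow_nonneg hm0.le _)) (hgrow m hm)
  have hlα : (0:ℝ) < l ^ α := Real.rpow_pos_of_pos hl _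
  have hG0 : ∀ m, 0 ≤ G m := by
    intro m
    simp only [hG_def]
    split
    · exact div_nonneg ENNReal.toReal_nonneg
        (mul_nonneg (Real.rpow_nonneg (by positivity) _)
          (Real.rpow_nonneg (Nat.cast_nonneg m) _))
    · exact le_refl 0
  have hF0 : ∀ m, 0 ≤ F m := by
    intro m
    simp only [hF_def]
    split
    · rename_i hm
      apply div_nonneg _ hlα.le
      apply mul_nonneg (Real.rpow_nonneg (Nat.cast_nonneg m) _)
      have := hamono (m - 1) m (le_trans one_le_two hm) (Nat.sub_le m 1)
      simp only [ha_def] at this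
      linarith
    · exact le_refl 0
  -- summability of G
  have hGsummable : Summable G := by
    refine Summable.of_nonneg_of_le hG0 (f := fun m : ℕ => C * (((m:ℝ) ^ (δ+1))⁻¹)) ?_
      ((Real.summable_nat_rpow_inv.mpr (by linarith)).mul_left C)
    intro m
    rcases Nat.eq_zero_or_pos m with rfl | hm
    · simp [hG_def]
      positivity
    · rw [hGm m hm]
      have hm1 : (1:ℝ) ≤ (m:ℝ) := by exact_mod_cast hm
      have hml : (0:ℝ) < (m:ℝ) * l := by nlinarith
      have hden : (0:ℝ) < ((m : ℝ) * l) ^ α * (m : ℝ) ^ (δ + 1) :=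
        mul_pos (Real.rpow_pos_of_pos hml _) (Real.rpow_pos_of_pos (by linarith) _)
      calc a m / (((m : ℝ) * l) ^ α * (m : ℝ) ^ (δ + 1))
          ≤ (C * ((m : ℝ) * l) ^ α) / (((m : ℝ) * l) ^ α * (m : ℝ) ^ (δ + 1)) := by
            exact div_le_div_of_nonneg_right (haC m hm) hden.le
        _ = C * (((m:ℝ) ^ (δ+1))⁻¹) := by
            field_simp
  -- the summation-by-parts step inequality
  have hstep : ∀ m : ℕ, 1 ≤ m →
      ((m : ℝ) ^ (-s) - ((m + 1 : ℕ) : ℝ) ^ (-s)) * a m / l ^ α ≤ s * G m := by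
    intro m hm
    have hm1 : (1:ℝ) ≤ (m : ℝ) := by exact_mod_cast hm
    have hm0 : (0:ℝ) < (m : ℝ) := by linarith
    have hb := bern_aux s hs (m : ℝ) hm1
    have hcast : ((m + 1 : ℕ) : ℝ) = (m : ℝ) + 1 := by push_cast; ring
    rw [hcast, hGm m hm]
    have h1 : ((m : ℝ) ^ (-s) - ((m : ℝ) + 1) ^ (-s)) * a m / l ^ α ≤
        s * (m : ℝ) ^ (-s - 1) * a m / l ^ α := by
      apply div_le_div_of_nonneg_right _ hlα.le
      exact mul_le_mul_of_nonneg_right hb (ha0 m)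
    refine h1.trans (le_of_eq ?_)
    have e1 : ((m : ℝ) * l) ^ α = (m : ℝ) ^ α * l ^ α :=
      Real.mul_rpow hm0.le hl.le
    have e2 : (m : ℝ) ^ (-s - 1) = ((m : ℝ) ^ α * (m : ℝ) ^ (δ + 1))⁻¹ := by
      rw [show -s - 1 = -(α + (δ + 1)) by rw [hs_def]; ring,
        Real.rpow_neg hm0.le, Real.rpow_add hm0]
    rw [e1, e2]
    have hp1 : (0:ℝ) < (m : ℝ) ^ α := Real.rpow_pos_of_pos hm0 _
    have hp2 : (0:ℝ) < (m : ℝ) ^ (δ + 1) := Real.rpow_pos_of_pos hm0 _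
    field_simp
  -- Abel summation bound on partial sums
  have habel : ∀ N : ℕ, ∑ m ∈ Finset.range (N + 2), F m ≤
      ((N + 1 : ℕ) : ℝ) ^ (-s) * a (N + 1) / l ^ α +
        s * ∑ m ∈ Finset.range (N + 1), G m := by
    intro N
    induction N with
    | zero =>
      have h0 : F 0 = 0 := by simp [hF_def]
      have h1 : F 1 = 0 := by simp [hF_def]
      rw [Finset.sum_range_succ, Finset.sum_range_succ, Finset.sum_range_zero,
        Finset.sum_range_one, h0, h1]
      have hG00 : G 0 = 0 := by simp [hG_def]
      rw [hG00]
      have : (0:ℝ) ≤ ((1 : ℕ) : ℝ) ^ (-s) * a 1 / l ^ α :=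
        div_nonneg (mul_nonneg (Real.rpow_nonneg (by norm_num) _) (ha0 1)) hlα.le
      simpa using this
    | succ N ih =>
      have hFN : F (N + 2) = ((N + 2 : ℕ) : ℝ) ^ (-s) * a (N + 2) / l ^ α -
          ((N + 2 : ℕ) : ℝ) ^ (-s) * a (N + 1) / l ^ α := by
        rw [hFm (N + 2) (by omega)]
        have : (N + 2) - 1 = N + 1 := by omega
        rw [this]
        ring
      have hst := hstep (N + 1) (by omega)
      have hst' : ((N + 1 : ℕ) : ℝ) ^ (-s) * a (N + 1) / l ^ α -
          ((N + 2 : ℕ) : ℝ) ^ (-s) * a (N + 1) / l ^ α ≤ s * G (N + 1) := by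
        have hc2 : ((N + 1 + 1 : ℕ) : ℝ) = ((N + 2 : ℕ) : ℝ) := by push_cast; ring
        rw [hc2] at hst
        rw [← sub_div, ← sub_mul]
        exact hst
      rw [show N + 1 + 2 = (N + 2) + 1 by omega, Finset.sum_range_succ,
        show N + 1 + 1 = (N + 1) + 1 by omega, Finset.sum_range_succ (f := G)]
      rw [hFN]
      nlinarith [ih, hst']
  -- boundary term bound via doubling
  have hboundary : ∀ R : ℕ, 1 ≤ R →
      ((R : ℕ) : ℝ) ^ (-s) * a R / l ^ α ≤ 2 ^ (s + 1) * ∑' m, G m := by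
    intro R hR
    have hR1 : (1:ℝ) ≤ (R : ℝ) := by exact_mod_cast hR
    have hR0 : (0:ℝ) < (R : ℝ) := by linarith
    set D : ℝ := a R / ((2 * (R : ℝ) * l) ^ α * (2 * (R : ℝ)) ^ (δ + 1)) with hD_def
    have hterm : ∀ m ∈ Finset.Icc (R + 1) (2 * R), D ≤ G m := by
      intro m hm
      rw [Finset.mem_Icc] at hm
      have hmge : 1 ≤ m := by omega
      have hm1 : (1:ℝ) ≤ (m : ℝ) := by exact_mod_cast hmge
      have hm0 : (0:ℝ) < (m : ℝ) := by linarith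
      have hmle : (m : ℝ) ≤ 2 * (R : ℝ) := by exact_mod_cast hm.2
      rw [hGm m hmge, hD_def]
      apply div_le_div₀ (ha0 m) (hamono R m hmge (by omega))
        (mul_pos (Real.rpow_pos_of_pos (by nlinarith) _) (Real.rpow_pos_of_pos hm0 _))
      apply mul_le_mul _ _ (Real.rpow_nonneg hm0.le _) (Real.rpow_nonneg (by positivity) _)
      · exact Real.rpow_le_rpow (by positivity) (by nlinarith) hα.le
      · exact Real.rpow_le_rpow hm0.le hmle (by linarith)
    have hcard : (Finset.Icc (R + 1) (2 * R)).card = R := by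
      rw [Nat.card_Icc]; omega
    have hsum1 : (R : ℝ) * D ≤ ∑ m ∈ Finset.Icc (R + 1) (2 * R), G m := by
      have := Finset.card_nsmul_le_sum (Finset.Icc (R + 1) (2 * R)) G D hterm
      rwa [hcard, nsmul_eq_mul] at this
    have hsum2 : ∑ m ∈ Finset.Icc (R + 1) (2 * R), G m ≤ ∑' m, G m :=
      Summable.sum_le_tsum _ (fun i _ => hG0 i) hGsummable
    have hkey : ((R : ℕ) : ℝ) ^ (-s) * a R / l ^ α = 2 ^ (s + 1) * ((R : ℝ) * D) := by
      rw [hD_def]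
      have e1 : (2 * (R : ℝ) * l) ^ α = 2 ^ α * (R : ℝ) ^ α * l ^ α := by
        rw [Real.mul_rpow (by positivity) hl.le, Real.mul_rpow (by norm_num) hR0.le]
      have e2 : (2 * (R : ℝ)) ^ (δ + 1) = 2 ^ (δ + 1) * (R : ℝ) ^ (δ + 1) :=
        Real.mul_rpow (by norm_num) hR0.le
      have e3 : ((R : ℝ)) ^ (-s) = ((R : ℝ) ^ α * (R : ℝ) ^ δ)⁻¹ := by
        rw [hs_def, Real.rpow_neg hR0.le, Real.rpow_add hR0]
      have e4 : (R : ℝ) ^ (δ + 1) = (R : ℝ) ^ δ * (R : ℝ) := by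
        rw [Real.rpow_add hR0, Real.rpow_one]
      have e5 : (2:ℝ) ^ (s + 1) = 2 ^ α * 2 ^ (δ + 1) := by
        rw [hs_def, show α + δ + 1 = α + (δ + 1) by ring, Real.rpow_add (by norm_num)]
      rw [e1, e2, e3, e5]
      rw [e4]
      have hp1 : (0:ℝ) < (R : ℝ) ^ α := Real.rpow_pos_of_pos hR0 _
      have hp2 : (0:ℝ) < (R : ℝ) ^ δ := Real.rpow_pos_of_pos hR0 _
      have hp3 : (0:ℝ) < (2:ℝ) ^ α := Real.rpow_pos_of_pos (by norm_num) _
      have hp4 : (0:ℝ) < (2:ℝ) ^ (δ + 1) := Real.rpow_pos_of_pos (by norm_num) _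
      field_simp
    rw [hkey]
    have h2p : (0:ℝ) ≤ (2:ℝ) ^ (s + 1) := (Real.rpow_pos_of_pos (by norm_num) _).le
    exact mul_le_mul_of_nonneg_left (hsum1.trans hsum2) h2p
  -- partial sums of F are uniformly bounded
  have hmain : ∀ N : ℕ, ∑ m ∈ Finset.range N, F m ≤
      (s + 2 ^ (s + 1)) * ∑' m, G m := by
    intro N
    have h1 : ∑ m ∈ Finset.range N, F m ≤ ∑ m ∈ Finset.range (N + 2), F m := by
      apply Finset.sum_le_sum_of_subset_of_nonneg
      · exact Finset.range_subset_range.mpr (by omega)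
      · intro i _ _; exact hF0 i
    have h2 := habel N
    have h3 := hboundary (N + 1) (by omega)
    have h4 : ∑ m ∈ Finset.range (N + 1), G m ≤ ∑' m, G m :=
      Summable.sum_le_tsum _ (fun i _ => hG0 i) hGsummable
    have h5 : s * ∑ m ∈ Finset.range (N + 1), G m ≤ s * ∑' m, G m :=
      mul_le_mul_of_nonneg_left h4 hs.le
    calc ∑ m ∈ Finset.range N, F m
        ≤ ↑(N + 1) ^ (-s) * a (N + 1) / l ^ α + s * ∑ m ∈ Finset.range (N + 1), G m :=
          le_trans h1 h2
      _ ≤ 2 ^ (s + 1) * ∑' (m : ℕ), G m + s * ∑' (m : ℕ), G m := add_le_add h3 h5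
      _ = (s + 2 ^ (s + 1)) * ∑' (m : ℕ), G m := by ring
  exact Real.tsum_le_of_sum_range_le hF0 hmain

end
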